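/- Let F(x,y,z,u,v) = x^{12} + y^{12} + z^4 + u^4 + v^3 + a·xyzuv + b·x^4 y^4 v with parameters a, b ∈ ℂ (the two-parameter family of Calabi–Yau threefolds in the weighted projective space P(1,1,3,3,4)). There exists a point (x,y,z,u,v) ∈ ℂ^5, not equal to (0,0,0,0,0), at which all five partial derivatives of F vanish, if and only if (b^3 + 27) · (a^{12} − a^8 b^4 − 576 a^8 b + 512 a^4 b^5 + 96768 a^4 b^2 − 65536 b^6 − 3538944 b^3 − 47775744) = 0. -/

import Mathlib

/- Statement 19: discriminant of the two-parameter family of Calabi–Yau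
threefolds in P(1,1,3,3,4):
F = x^12 + y^12 + z^4 + u^4 + v^3 + a·xyzuv + b·x^4 y^4 v. -/

noncomputable def F11334 (a b : ℂ) (p : Fin 5 → ℂ) : ℂ :=
  p 0 ^ 12 + p 1 ^ 12 + p 2 ^ 4 + p 3 ^ 4 + p 4 ^ 3 +
    a * (p 0 * p 1 * p 2 * p 3 * p 4) + b * (p 0 ^ 4 * p 1 ^ 4 * p 4)

set_option linter.unnecessarySeqFocus false

private lemma dshape1 (c k m A B x : ℂ) :
    deriv (fun t : ℂ => t ^ 12 + c + A * (t * k) + B * (t ^ 4 * m)) x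
      = 12 * x ^ 11 + A * k + 4 * B * (x ^ 3 * m) := by
  have h1 : HasDerivAt (fun t : ℂ => t ^ 12 + c) (12 * x ^ 11) x := by
    simpa using (hasDerivAt_pow 12 x).add_const c
  have h2 : HasDerivAt (fun t : ℂ => A * (t * k)) (A * k) x := by
    simpa using ((hasDerivAt_id x).mul_const k).const_mul A
  have h3 : HasDerivAt (fun t : ℂ => B * (t ^ 4 * m)) (4 * B * (x ^ 3 * m)) x := by
    have := ((hasDerivAt_pow 4 x).mul_const m).const_mul B
    rw [show (4 : ℂ) * B * (x ^ 3 * m) = B * (((4 : ℕ) : ℂ) * x ^ (4 - 1) * m) by push_cast; ring]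
    exact this
  exact ((h1.add h2).add h3).deriv

private lemma dshape2 (c k A x : ℂ) :
    deriv (fun t : ℂ => c + t ^ 4 + A * (t * k)) x = 4 * x ^ 3 + A * k := by
  have h1 : HasDerivAt (fun t : ℂ => c + t ^ 4) (4 * x ^ 3) x := by
    simpa using (hasDerivAt_pow 4 x).const_add c
  have h2 : HasDerivAt (fun t : ℂ => A * (t * k)) (A * k) x := by
    simpa using ((hasDerivAt_id x).mul_const k).const_mul A
  exact (h1.add h2).deriv

private lemma dshape3 (c k m A B x : ℂ) :
    deriv (fun t : ℂ => c + t ^ 3 + A * (t * k) + B * (t * m)) x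
      = 3 * x ^ 2 + A * k + B * m := by
  have h1 : HasDerivAt (fun t : ℂ => c + t ^ 3) (3 * x ^ 2) x := by
    simpa using (hasDerivAt_pow 3 x).const_add c
  have h2 : HasDerivAt (fun t : ℂ => A * (t * k)) (A * k) x := by
    simpa using ((hasDerivAt_id x).mul_const k).const_mul A
  have h3 : HasDerivAt (fun t : ℂ => B * (t * m)) (B * m) x := by
    simpa using ((hasDerivAt_id x).mul_const m).const_mul B
  exact ((h1.add h2).add h3).deriv

private lemma FD0 (a b : ℂ) (p : Fin 5 → ℂ) :
    deriv (fun t : ℂ => F11334 a b (Function.update p 0 t)) (p 0)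
      = 12 * p 0 ^ 11 + a * (p 1 * p 2 * p 3 * p 4)
        + 4 * b * (p 0 ^ 3 * (p 1 ^ 4 * p 4)) := by
  have hf : (fun t : ℂ => F11334 a b (Function.update p 0 t))
      = fun t : ℂ => t ^ 12 + (p 1 ^ 12 + p 2 ^ 4 + p 3 ^ 4 + p 4 ^ 3)
          + a * (t * (p 1 * p 2 * p 3 * p 4)) + b * (t ^ 4 * (p 1 ^ 4 * p 4)) := by
    funext t
    simp [F11334, Function.update_apply]
    ring
  rw [hf, dshape1]

private lemma FD1 (a b : ℂ) (p : Fin 5 → ℂ) :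
    deriv (fun t : ℂ => F11334 a b (Function.update p 1 t)) (p 1)
      = 12 * p 1 ^ 11 + a * (p 0 * p 2 * p 3 * p 4)
        + 4 * b * (p 1 ^ 3 * (p 0 ^ 4 * p 4)) := by
  have hf : (fun t : ℂ => F11334 a b (Function.update p 1 t))
      = fun t : ℂ => t ^ 12 + (p 0 ^ 12 + p 2 ^ 4 + p 3 ^ 4 + p 4 ^ 3)
          + a * (t * (p 0 * p 2 * p 3 * p 4)) + b * (t ^ 4 * (p 0 ^ 4 * p 4)) := by
    funext t
    simp [F11334, Function.update_apply]
    ring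
  rw [hf, dshape1]

private lemma FD2 (a b : ℂ) (p : Fin 5 → ℂ) :
    deriv (fun t : ℂ => F11334 a b (Function.update p 2 t)) (p 2)
      = 4 * p 2 ^ 3 + a * (p 0 * p 1 * p 3 * p 4) := by
  have hf : (fun t : ℂ => F11334 a b (Function.update p 2 t))
      = fun t : ℂ => (p 0 ^ 12 + p 1 ^ 12 + p 3 ^ 4 + p 4 ^ 3
            + b * (p 0 ^ 4 * p 1 ^ 4 * p 4)) + t ^ 4
          + a * (t * (p 0 * p 1 * p 3 * p 4)) := by
    funext t
    simp [F11334, Function.update_apply]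
    ring
  rw [hf, dshape2]

private lemma FD3 (a b : ℂ) (p : Fin 5 → ℂ) :
    deriv (fun t : ℂ => F11334 a b (Function.update p 3 t)) (p 3)
      = 4 * p 3 ^ 3 + a * (p 0 * p 1 * p 2 * p 4) := by
  have hf : (fun t : ℂ => F11334 a b (Function.update p 3 t))
      = fun t : ℂ => (p 0 ^ 12 + p 1 ^ 12 + p 2 ^ 4 + p 4 ^ 3
            + b * (p 0 ^ 4 * p 1 ^ 4 * p 4)) + t ^ 4
          + a * (t * (p 0 * p 1 * p 2 * p 4)) := by
    funext t
    simp [F11334, Function.update_apply]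
    ring
  rw [hf, dshape2]

private lemma FD4 (a b : ℂ) (p : Fin 5 → ℂ) :
    deriv (fun t : ℂ => F11334 a b (Function.update p 4 t)) (p 4)
      = 3 * p 4 ^ 2 + a * (p 0 * p 1 * p 2 * p 3) + b * (p 0 ^ 4 * p 1 ^ 4) := by
  have hf : (fun t : ℂ => F11334 a b (Function.update p 4 t))
      = fun t : ℂ => (p 0 ^ 12 + p 1 ^ 12 + p 2 ^ 4 + p 3 ^ 4) + t ^ 3
          + a * (t * (p 0 * p 1 * p 2 * p 3)) + b * (t * (p 0 ^ 4 * p 1 ^ 4)) := by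
    funext t
    simp [F11334, Function.update_apply]
    ring
  rw [hf, dshape3]

/-- Resultant of two quadratics sharing a root vanishes. -/
private lemma res_quad (f2 f1 f0 g2 g1 g0 v : ℂ)
    (hf : f2 * v ^ 2 + f1 * v + f0 = 0) (hg : g2 * v ^ 2 + g1 * v + g0 = 0) :
    (f2 * g0 - f0 * g2) ^ 2 - (f2 * g1 - f1 * g2) * (f1 * g0 - f0 * g1) = 0 := by
  linear_combination ((f2 * g1 - f1 * g2) * (g2 * v + g1) - (f2 * g0 - f0 * g2) * g2) * hf
    + ((f2 * g0 - f0 * g2) * f2 - (f2 * g1 - f1 * g2) * (f2 * v + f1)) * hg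

/-- Backward construction, generic case. -/
private lemma build (a b ε ω : ℂ) (hε : ε ^ 2 = 1) (hω6 : ω ^ 6 = ε)
    (hqe : (a ^ 4 * b ^ 2 - 256 * b ^ 3 - 6912) + ε * (a ^ 6 - 288 * a ^ 2 * b) = 0) :
    ∃ p : Fin 5 → ℂ, p ≠ 0 ∧ ∀ i : Fin 5,
      deriv (fun t : ℂ => F11334 a b (Function.update p i t)) (p i) = 0 := by
  have hωne : ω ≠ 0 := by
    intro h; rw [h] at hω6
    rw [← hω6] at hε; simp at hε
  have hω12 : ω ^ 12 = 1 := by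
    calc ω ^ 12 = (ω ^ 6) ^ 2 := by ring
    _ = 1 := by rw [hω6]; exact hε
  -- q(α,β) = 0 for α = a ω, β = b ω⁴
  have hq : (a * ω) ^ 6 + (a * ω) ^ 4 * (b * ω ^ 4) ^ 2 - 288 * (a * ω) ^ 2 * (b * ω ^ 4)
      - 256 * (b * ω ^ 4) ^ 3 - 6912 = 0 := by
    linear_combination hqe
      + (a ^ 6 - 288 * a ^ 2 * b + (a ^ 4 * b ^ 2 - 256 * b ^ 3) * (ω ^ 6 + ε)) * hω6
      + (a ^ 4 * b ^ 2 - 256 * b ^ 3) * hε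
  obtain ⟨s, hs⟩ := IsAlgClosed.exists_pow_nat_eq ((a * ω) ^ 4 - 192 * (b * ω ^ 4))
    (n := 2) (by norm_num)
  obtain ⟨v, hf, hg⟩ : ∃ v : ℂ, (12 * v ^ 2 - (a * ω) ^ 2 * v + 4 * (b * ω ^ 4) = 0)
      ∧ ((a * ω) ^ 2 * v ^ 2 - 16 * (b * ω ^ 4) * v - 48 = 0) := by
    have hprod : ((a * ω) ^ 2 * ((((a * ω) ^ 2 + s) / 24)) ^ 2
          - 16 * (b * ω ^ 4) * (((a * ω) ^ 2 + s) / 24) - 48)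
        * ((a * ω) ^ 2 * ((((a * ω) ^ 2 - s) / 24)) ^ 2
          - 16 * (b * ω ^ 4) * (((a * ω) ^ 2 - s) / 24) - 48) = 0 := by
      have : ((a * ω) ^ 2 * ((((a * ω) ^ 2 + s) / 24)) ^ 2
            - 16 * (b * ω ^ 4) * (((a * ω) ^ 2 + s) / 24) - 48)
          * ((a * ω) ^ 2 * ((((a * ω) ^ 2 - s) / 24)) ^ 2
            - 16 * (b * ω ^ 4) * (((a * ω) ^ 2 - s) / 24) - 48)
          = (-1 / 3) * ((a * ω) ^ 6 + (a * ω) ^ 4 * (b * ω ^ 4) ^ 2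
              - 288 * (a * ω) ^ 2 * (b * ω ^ 4) - 256 * (b * ω ^ 4) ^ 3 - 6912) := by
        linear_combination ((-1 / 331776) * (a * ω) ^ 8 + (1 / 576) * (a * ω) ^ 4 * (b * ω ^ 4)
          + (1 / 331776) * (a * ω) ^ 4 * s ^ 2 + (-1 / 6) * (a * ω) ^ 2
          + (-4 / 9) * (b * ω ^ 4) ^ 2) * hs
      rw [this, hq, mul_zero]
    rcases mul_eq_zero.mp hprod with h | h
    · exact ⟨((a * ω) ^ 2 + s) / 24, by linear_combination (1 / 48) * hs, h⟩
    · exact ⟨((a * ω) ^ 2 - s) / 24, by linear_combination (1 / 48) * hs, h⟩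
  obtain ⟨t, ht⟩ := IsAlgClosed.exists_pow_nat_eq (-(a * ω * v) / 4) (n := 2) (by norm_num)
  refine ⟨![1, ω, t, t, v], ?_, ?_⟩
  · intro h
    have := congrFun h 0
    simp at this
  · intro i
    fin_cases i
    · show deriv (fun τ : ℂ => F11334 a b (Function.update ![1, ω, t, t, v] 0 τ))
        (![1, ω, t, t, v] 0) = 0
      rw [FD0]
      simp only [Matrix.cons_val_zero, Matrix.cons_val_one, Matrix.head_cons,
        Matrix.cons_val_two, Matrix.tail_cons, Matrix.cons_val_three, Matrix.cons_val_four]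
      linear_combination (a * ω * v) * ht - (1 / 4) * hg
    · show deriv (fun τ : ℂ => F11334 a b (Function.update ![1, ω, t, t, v] 1 τ))
        (![1, ω, t, t, v] 1) = 0
      rw [FD1]
      simp only [Matrix.cons_val_zero, Matrix.cons_val_one, Matrix.head_cons,
        Matrix.cons_val_two, Matrix.tail_cons, Matrix.cons_val_three, Matrix.cons_val_four]
      have hkey : ω * (12 * ω ^ 11 + a * (1 * t * t * v) + 4 * b * (ω ^ 3 * (1 ^ 4 * v))) = 0 := by
        linear_combination 12 * hω12 + (a * ω * v) * ht - (1 / 4) * hg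
      rcases mul_eq_zero.mp hkey with h | h
      · exact absurd h hωne
      · exact h
    · show deriv (fun τ : ℂ => F11334 a b (Function.update ![1, ω, t, t, v] 2 τ))
        (![1, ω, t, t, v] 2) = 0
      rw [FD2]
      simp only [Matrix.cons_val_zero, Matrix.cons_val_one, Matrix.head_cons,
        Matrix.cons_val_two, Matrix.tail_cons, Matrix.cons_val_three, Matrix.cons_val_four]
      linear_combination (4 * t) * ht
    · show deriv (fun τ : ℂ => F11334 a b (Function.update ![1, ω, t, t, v] 3 τ))
        (![1, ω, t, t, v] 3) = 0
      rw [FD3]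
      simp only [Matrix.cons_val_zero, Matrix.cons_val_one, Matrix.head_cons,
        Matrix.cons_val_two, Matrix.tail_cons, Matrix.cons_val_three, Matrix.cons_val_four]
      linear_combination (4 * t) * ht
    · show deriv (fun τ : ℂ => F11334 a b (Function.update ![1, ω, t, t, v] 4 τ))
        (![1, ω, t, t, v] 4) = 0
      rw [FD4]
      simp only [Matrix.cons_val_zero, Matrix.cons_val_one, Matrix.head_cons,
        Matrix.cons_val_two, Matrix.tail_cons, Matrix.cons_val_three, Matrix.cons_val_four]
      linear_combination (a * ω) * ht + (1 / 4) * hf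

theorem stmt_19 (a b : ℂ) :
    (∃ p : Fin 5 → ℂ, p ≠ 0 ∧ ∀ i : Fin 5,
        deriv (fun t : ℂ => F11334 a b (Function.update p i t)) (p i) = 0) ↔
      (b ^ 3 + 27) *
        (a ^ 12 - a ^ 8 * b ^ 4 - 576 * a ^ 8 * b + 512 * a ^ 4 * b ^ 5 +
          96768 * a ^ 4 * b ^ 2 - 65536 * b ^ 6 - 3538944 * b ^ 3 - 47775744) = 0 := by
  constructor
  · rintro ⟨p, hp, hcrit⟩
    obtain ⟨x, y, z, u, v, rfl⟩ : ∃ x y z u v : ℂ, p = ![x, y, z, u, v] :=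
      ⟨p 0, p 1, p 2, p 3, p 4, by
        funext i; fin_cases i <;> rfl⟩
    have e0 : 12 * x ^ 11 + a * (y * z * u * v) + 4 * b * (x ^ 3 * (y ^ 4 * v)) = 0 := by
      have h := hcrit 0
      rw [FD0] at h
      simp only [Matrix.cons_val_zero, Matrix.cons_val_one, Matrix.head_cons,
        Matrix.cons_val_two, Matrix.tail_cons, Matrix.cons_val_three, Matrix.cons_val_four] at h
      linear_combination h
    have e1 : 12 * y ^ 11 + a * (x * z * u * v) + 4 * b * (y ^ 3 * (x ^ 4 * v)) = 0 := by
      have h := hcrit 1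
      rw [FD1] at h
      simp only [Matrix.cons_val_zero, Matrix.cons_val_one, Matrix.head_cons,
        Matrix.cons_val_two, Matrix.tail_cons, Matrix.cons_val_three, Matrix.cons_val_four] at h
      linear_combination h
    have e2 : 4 * z ^ 3 + a * (x * y * u * v) = 0 := by
      have h := hcrit 2
      rw [FD2] at h
      simp only [Matrix.cons_val_zero, Matrix.cons_val_one, Matrix.head_cons,
        Matrix.cons_val_two, Matrix.tail_cons, Matrix.cons_val_three, Matrix.cons_val_four] at h
      linear_combination h
    have e3 : 4 * u ^ 3 + a * (x * y * z * v) = 0 := by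
      have h := hcrit 3
      rw [FD3] at h
      simp only [Matrix.cons_val_zero, Matrix.cons_val_one, Matrix.head_cons,
        Matrix.cons_val_two, Matrix.tail_cons, Matrix.cons_val_three, Matrix.cons_val_four] at h
      linear_combination h
    have e4 : 3 * v ^ 2 + a * (x * y * z * u) + b * (x ^ 4 * y ^ 4) = 0 := by
      have h := hcrit 4
      rw [FD4] at h
      simp only [Matrix.cons_val_zero, Matrix.cons_val_one, Matrix.head_cons,
        Matrix.cons_val_two, Matrix.tail_cons, Matrix.cons_val_three, Matrix.cons_val_four] at h
      linear_combination h
    -- x ≠ 0 and y ≠ 0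
    have hxy : x ≠ 0 ∧ y ≠ 0 := by
      constructor
      · intro h0
        subst h0
        have hz : z = 0 := by
          have : z ^ 3 = 0 := by linear_combination (1 / 4) * e2
          exact pow_eq_zero_iff (by norm_num) |>.mp this
        have hu : u = 0 := by
          have : u ^ 3 = 0 := by linear_combination (1 / 4) * e3
          exact pow_eq_zero_iff (by norm_num) |>.mp this
        have hv : v = 0 := by
          have : v ^ 2 = 0 := by linear_combination (1 / 3) * e4
          exact pow_eq_zero_iff (by norm_num) |>.mp this
        have hy : y = 0 := by
          have : y ^ 11 = 0 := by linear_combination (1 / 12) * e1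
          exact pow_eq_zero_iff (by norm_num) |>.mp this
        exact hp (by funext i; fin_cases i <;> simp [hz, hu, hv, hy])
      · intro h0
        subst h0
        have hz : z = 0 := by
          have : z ^ 3 = 0 := by linear_combination (1 / 4) * e2
          exact pow_eq_zero_iff (by norm_num) |>.mp this
        have hu : u = 0 := by
          have : u ^ 3 = 0 := by linear_combination (1 / 4) * e3
          exact pow_eq_zero_iff (by norm_num) |>.mp this
        have hv : v = 0 := by
          have : v ^ 2 = 0 := by linear_combination (1 / 3) * e4
          exact pow_eq_zero_iff (by norm_num) |>.mp this
        have hx : x = 0 := by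
          have : x ^ 11 = 0 := by linear_combination (1 / 12) * e0
          exact pow_eq_zero_iff (by norm_num) |>.mp this
        exact hp (by funext i; fin_cases i <;> simp [hz, hu, hv, hx])
    obtain ⟨hx, hy⟩ := hxy
    by_cases hz : z = 0
    · -- degenerate case: z = u = 0, discriminant factor b³+27
      subst hz
      have hu : u = 0 := by
        have : u ^ 3 = 0 := by linear_combination (1 / 4) * e3
        exact pow_eq_zero_iff (by norm_num) |>.mp this
      subst hu
      have hv : v ≠ 0 := by
        intro h0
        subst h0
        have : x ^ 11 = 0 := by linear_combination (1 / 12) * e0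
        exact hx (pow_eq_zero_iff (by norm_num) |>.mp this)
      have hA1 : 3 * x ^ 8 + b * (y ^ 4 * v) = 0 := by
        have h4 : (4 * x ^ 3) * (3 * x ^ 8 + b * (y ^ 4 * v)) = 0 := by
          linear_combination e0
        rcases mul_eq_zero.mp h4 with h | h
        · exact absurd (pow_eq_zero_iff (n := 3) (by norm_num) |>.mp
            (by linear_combination (1 / 4) * h)) hx
        · exact h
      have hA2 : 3 * y ^ 8 + b * (x ^ 4 * v) = 0 := by
        have h4 : (4 * y ^ 3) * (3 * y ^ 8 + b * (x ^ 4 * v)) = 0 := by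
          linear_combination e1
        rcases mul_eq_zero.mp h4 with h | h
        · exact absurd (pow_eq_zero_iff (n := 3) (by norm_num) |>.mp
            (by linear_combination (1 / 4) * h)) hy
        · exact h
      have hA3 : 3 * v ^ 2 + b * (x ^ 4 * y ^ 4) = 0 := by
        linear_combination e4
      have key : (b ^ 3 + 27) * (x ^ 8 * y ^ 8 * v ^ 2) = 0 := by
        linear_combination (b ^ 2 * x ^ 4 * y ^ 4 * v ^ 2) * hA3
          + (-3 * b * y ^ 4 * v ^ 3) * hA2 + (9 * y ^ 8 * v ^ 2) * hA1
      rcases mul_eq_zero.mp key with h | h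
      · rw [h, zero_mul]
      · exact absurd h (mul_ne_zero (mul_ne_zero (pow_ne_zero _ hx) (pow_ne_zero _ hy))
          (pow_ne_zero _ hv))
    · -- generic case
      have hu : u ≠ 0 := by
        intro h0
        subst h0
        exact hz (pow_eq_zero_iff (n := 3) (by norm_num) |>.mp
          (by linear_combination (1 / 4) * e2))
      have hv : v ≠ 0 := by
        intro h0
        subst h0
        exact hz (pow_eq_zero_iff (n := 3) (by norm_num) |>.mp
          (by linear_combination (1 / 4) * e2))
      have hx12 : x ^ 12 = y ^ 12 := by
        linear_combination (x / 12) * e0 - (y / 12) * e1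
      have hz4 : z ^ 4 = u ^ 4 := by
        linear_combination (z / 4) * e2 - (u / 4) * e3
      have hq1 : (12 * z ^ 4) * v ^ 2 + (-(a ^ 2 * x ^ 2 * y ^ 2 * z ^ 2 * u ^ 2)) * v
          + 4 * b * x ^ 4 * y ^ 4 * u ^ 4 = 0 := by
        linear_combination (4 * z ^ 4) * e4 - (a * x * y * z ^ 2 * u) * e2
          - (4 * b * x ^ 4 * y ^ 4) * hz4
      have hq2 : (a ^ 2 * x ^ 2 * y ^ 2 * z ^ 2 * u ^ 2) * v ^ 2
          + (-(16 * b * x ^ 4 * y ^ 4 * u ^ 4)) * v + (-(48 * x ^ 12 * z ^ 4)) = 0 := by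
        linear_combination (-(4 * x * z ^ 4)) * e0 + (a * x * y * z ^ 2 * u * v) * e2
          + (16 * b * x ^ 4 * y ^ 4 * v) * hz4
      have hres := res_quad (12 * z ^ 4) (-(a ^ 2 * x ^ 2 * y ^ 2 * z ^ 2 * u ^ 2))
        (4 * b * x ^ 4 * y ^ 4 * u ^ 4) (a ^ 2 * x ^ 2 * y ^ 2 * z ^ 2 * u ^ 2)
        (-(16 * b * x ^ 4 * y ^ 4 * u ^ 4)) (-(48 * x ^ 12 * z ^ 4)) v hq1 hq2
      have hCD0 : (-48 * (x ^ 18 * z ^ 14)) *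
          ((a ^ 4 * b ^ 2 - 256 * b ^ 3 - 6912) * (x ^ 6 * z ^ 2)
            + (a ^ 6 - 288 * a ^ 2 * b) * (y ^ 6 * u ^ 2)) = 0 := by
        linear_combination hres
          + (-48 * a ^ 4 * b ^ 2 * x ^ 12 * z ^ 4 * u ^ 12
              + 12288 * b ^ 3 * x ^ 12 * z ^ 4 * u ^ 12) * hx12
          + (-48 * a ^ 6 * x ^ 18 * y ^ 6 * z ^ 10 * u ^ 2
              - 48 * a ^ 4 * b ^ 2 * x ^ 24 * z ^ 12
              - 48 * a ^ 4 * b ^ 2 * x ^ 24 * z ^ 8 * u ^ 4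
              - 48 * a ^ 4 * b ^ 2 * x ^ 24 * z ^ 4 * u ^ 8
              + 13824 * a ^ 2 * b * x ^ 18 * y ^ 6 * z ^ 10 * u ^ 2
              + 12288 * b ^ 3 * x ^ 24 * z ^ 12
              + 12288 * b ^ 3 * x ^ 24 * z ^ 8 * u ^ 4
              + 12288 * b ^ 3 * x ^ 24 * z ^ 4 * u ^ 8) * hz4
      have hCD : (a ^ 4 * b ^ 2 - 256 * b ^ 3 - 6912) * (x ^ 6 * z ^ 2)
          + (a ^ 6 - 288 * a ^ 2 * b) * (y ^ 6 * u ^ 2) = 0 := by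
        rcases mul_eq_zero.mp hCD0 with h | h
        · exfalso
          have : x ^ 18 * z ^ 14 ≠ 0 := mul_ne_zero (pow_ne_zero _ hx) (pow_ne_zero _ hz)
          have h' : (x ^ 18 * z ^ 14) = 0 ∨ (-48 : ℂ) = 0 := by
            rcases mul_eq_zero.mp h with h2 | h2
            · exact Or.inr (by linear_combination h2)
            · exact Or.inl h2
          rcases h' with h2 | h2
          · exact this h2
          · norm_num at h2
        · exact h
      have hbig : (a ^ 12 - a ^ 8 * b ^ 4 - 576 * a ^ 8 * b + 512 * a ^ 4 * b ^ 5 +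
          96768 * a ^ 4 * b ^ 2 - 65536 * b ^ 6 - 3538944 * b ^ 3 - 47775744)
          * (x ^ 12 * z ^ 4) = 0 := by
        linear_combination
          (-((a ^ 4 * b ^ 2 - 256 * b ^ 3 - 6912) * (x ^ 6 * z ^ 2)
            - (a ^ 6 - 288 * a ^ 2 * b) * (y ^ 6 * u ^ 2))) * hCD
          + ((a ^ 6 - 288 * a ^ 2 * b) ^ 2 * z ^ 4) * hx12
          + ((a ^ 6 - 288 * a ^ 2 * b) ^ 2 * y ^ 12) * hz4
      rcases mul_eq_zero.mp hbig with h | h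
      · rw [h, mul_zero]
      · exact absurd h (mul_ne_zero (pow_ne_zero _ hx) (pow_ne_zero _ hz))
  · intro hrhs
    rcases mul_eq_zero.mp hrhs with hb27 | hbig
    · -- b³ + 27 = 0 : degenerate branch
      have hb : b ≠ 0 := by
        intro h; rw [h] at hb27; norm_num at hb27
      refine ⟨![1, 1, 0, 0, -3 / b], ?_, ?_⟩
      · intro h
        have := congrFun h 0
        simp at this
      · intro i
        fin_cases i
        · show deriv (fun τ : ℂ => F11334 a b (Function.update ![1, 1, 0, 0, -3 / b] 0 τ))
            (![1, 1, 0, 0, -3 / b] 0) = 0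
          rw [FD0]
          simp only [Matrix.cons_val_zero, Matrix.cons_val_one, Matrix.head_cons,
            Matrix.cons_val_two, Matrix.tail_cons, Matrix.cons_val_three, Matrix.cons_val_four]
          field_simp
          ring
        · show deriv (fun τ : ℂ => F11334 a b (Function.update ![1, 1, 0, 0, -3 / b] 1 τ))
            (![1, 1, 0, 0, -3 / b] 1) = 0
          rw [FD1]
          simp only [Matrix.cons_val_zero, Matrix.cons_val_one, Matrix.head_cons,
            Matrix.cons_val_two, Matrix.tail_cons, Matrix.cons_val_three, Matrix.cons_val_four]
          field_simp
          ring
        · show deriv (fun τ : ℂ => F11334 a b (Function.update ![1, 1, 0, 0, -3 / b] 2 τ))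
            (![1, 1, 0, 0, -3 / b] 2) = 0
          rw [FD2]
          simp only [Matrix.cons_val_zero, Matrix.cons_val_one, Matrix.head_cons,
            Matrix.cons_val_two, Matrix.tail_cons, Matrix.cons_val_three, Matrix.cons_val_four]
          ring
        · show deriv (fun τ : ℂ => F11334 a b (Function.update ![1, 1, 0, 0, -3 / b] 3 τ))
            (![1, 1, 0, 0, -3 / b] 3) = 0
          rw [FD3]
          simp only [Matrix.cons_val_zero, Matrix.cons_val_one, Matrix.head_cons,
            Matrix.cons_val_two, Matrix.tail_cons, Matrix.cons_val_three, Matrix.cons_val_four]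
          ring
        · show deriv (fun τ : ℂ => F11334 a b (Function.update ![1, 1, 0, 0, -3 / b] 4 τ))
            (![1, 1, 0, 0, -3 / b] 4) = 0
          rw [FD4]
          simp only [Matrix.cons_val_zero, Matrix.cons_val_one, Matrix.head_cons,
            Matrix.cons_val_two, Matrix.tail_cons, Matrix.cons_val_three, Matrix.cons_val_four]
          field_simp
          linear_combination hb27
    · -- big = 0 : product of the two conjugate factors vanishes
      have hfac : ((a ^ 4 * b ^ 2 - 256 * b ^ 3 - 6912) + 1 * (a ^ 6 - 288 * a ^ 2 * b))
          * ((a ^ 4 * b ^ 2 - 256 * b ^ 3 - 6912) + (-1) * (a ^ 6 - 288 * a ^ 2 * b)) = 0 := by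
        linear_combination -hbig
      rcases mul_eq_zero.mp hfac with h | h
      · exact build a b 1 1 (by norm_num) (by norm_num) h
      · obtain ⟨ω, hω⟩ := IsAlgClosed.exists_pow_nat_eq (-1 : ℂ) (n := 6) (by norm_num)
        exact build a b (-1) ω (by norm_num) hω h
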